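/- Assume (J) and (F2'), suppose c_β ∈ ℝ for every 0 < β ≤ +∞, and let the maps η_β satisfy (η2)_β. Then: (a) if β_n → +∞, x_n ∈ K_{β_n} for every n, and x_n → x in M, then x ∈ C_*; that is, limsup_{β→+∞} K_β ⊆ C_*. (b) For every x ∈ C_* one has J_∞(x) ≤ c_∞. -/
import Mathlib


open Filter Topology

/-- Kuratowski limit superior of a sequence of subsets of a metric space. -/
def SeqLimsup {X : Type*} [MetricSpace X] (A : ℕ → Set X) : Set X :=
  {x | ∃ φ : ℕ → ℕ, StrictMono φ ∧
    ∃ y : ℕ → X, (∀ n, y n ∈ A (φ n)) ∧ Tendsto y atTop (𝓝 x)}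

/-- Assume (J) and (F2'), suppose the minimax levels are real, and let the maps
`η_β` satisfy `(η2)_β`. Then:
(a) if `β_n → +∞`, `x_n ∈ K_{β_n}` for every `n`, and `x_n → x` in `M`, then
`x ∈ C_*`; that is, `limsup_{β→+∞} K_β ⊆ C_*`.
(b) For every `x ∈ C_*` one has `J_∞(x) ≤ c_∞`. -/
theorem limsup_Kbeta_subset_Cstar_and_Cstar_below_cinf {X : Type*} [MetricSpace X]
    (F : Set (Set X)) (J : ℝ → X → EReal)
    -- each J_β, β > 0, is lower semicontinuous
    (hlsc : ∀ β : ℝ, 0 < β → LowerSemicontinuous (J β))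
    -- assumption (J): monotonicity in β on (0, +∞)
    (hmono : ∀ β₁ β₂ : ℝ, 0 < β₁ → β₁ ≤ β₂ → ∀ x, J β₁ x ≤ J β₂ x)
    -- the limit functional J_∞
    (Jinf : X → EReal) (hJinf : ∀ x, Jinf x = ⨆ β : ℝ, ⨆ _ : 0 < β, J β x)
    -- the minimax levels c_β, 0 < β < +∞, and c_∞; all of them real
    (cβ : ℝ → EReal) (hcβ : ∀ β : ℝ, cβ β = ⨅ A ∈ F, ⨆ x ∈ A, J β x)
    (cinf : ℝ) (hcinf : (⨅ A ∈ F, ⨆ x ∈ A, Jinf x) = (cinf : EReal))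
    (hcreal : ∀ β : ℝ, 0 < β → ∃ r : ℝ, cβ β = (r : EReal))
    -- assumption (F2')
    (hF2' : ∀ A : ℕ → Set X, (∀ n, A n ∈ F) →
      (∃ β : ℝ, 0 < β ∧ ∀ n, ∀ x ∈ A n, J β x ≤ (cinf : EReal) + 1) →
      SeqLimsup A ∈ F)
    -- the deformations η_β, 0 < β < +∞, mapping M_β^{c_∞+1} into itself
    (η : ℝ → X → X)
    (hηmap : ∀ β : ℝ, 0 < β → ∀ x, J β x ≤ (cinf : EReal) + 1 →
      J β (η β x) ≤ (cinf : EReal) + 1)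
    -- (η2)_β
    (hη2 : ∀ β : ℝ, 0 < β → ∀ x, J β x ≤ (cinf : EReal) + 1 →
      J β (η β x) ≤ J β x)
    -- the critical sets K_β, 0 < β < +∞
    (K : ℝ → Set X)
    (hKdef : ∀ β : ℝ, K β = {x | J β x = cβ β ∧ J β (η β x) = cβ β})
    -- the set C_*
    (Cstar : Set X)
    (hCstar : Cstar = {x | ∃ u : ℕ → X, ∃ b : ℕ → ℝ,
      (∀ n, 0 < b n) ∧ Tendsto b atTop atTop ∧ Tendsto u atTop (𝓝 x) ∧
      Tendsto (fun n => J (b n) (u n)) atTop (𝓝 (cinf : EReal)) ∧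
      Tendsto (fun n => J (b n) (η (b n) (u n))) atTop (𝓝 (cinf : EReal))}) :
    (∀ b : ℕ → ℝ, (∀ n, 0 < b n) → Tendsto b atTop atTop →
      ∀ u : ℕ → X, (∀ n, u n ∈ K (b n)) →
      ∀ x : X, Tendsto u atTop (𝓝 x) → x ∈ Cstar) ∧
    (∀ x ∈ Cstar, Jinf x ≤ (cinf : EReal)) := by
  -- J β ≤ Jinf pointwise
  have hJle : ∀ β : ℝ, 0 < β → ∀ x, J β x ≤ Jinf x := by
    intro β hβ x
    rw [hJinf]
    exact le_iSup₂ (f := fun β (_ : 0 < β) => J β x) β hβ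
  -- c_β ≤ c_∞
  have hcle : ∀ β : ℝ, 0 < β → cβ β ≤ (cinf : EReal) := by
    intro β hβ
    rw [hcβ, ← hcinf]
    exact iInf₂_mono fun A _ => iSup₂_mono fun x _ => hJle β hβ x
  -- monotonicity of c_β
  have hcmono : ∀ β₁ β₂ : ℝ, 0 < β₁ → β₁ ≤ β₂ → cβ β₁ ≤ cβ β₂ := by
    intro β₁ β₂ h1 h12
    rw [hcβ, hcβ]
    exact iInf₂_mono fun A _ => iSup₂_mono fun x _ => hmono β₁ β₂ h1 h12 x
  -- key step: c_β gets above cinf - ε for large β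
  have hlow : ∀ ε : ℝ, 0 < ε → ∃ N : ℕ, ((cinf - ε : ℝ) : EReal) < cβ ((N : ℝ) + 1) := by
    intro ε hε
    -- reduce to a small ε' ≤ 1
    set ε' : ℝ := min ε 1 with hε'def
    have hε' : 0 < ε' := lt_min hε one_pos
    have hε'1 : ε' ≤ 1 := min_le_right _ _
    suffices h : ∃ N : ℕ, ((cinf - ε' : ℝ) : EReal) < cβ ((N : ℝ) + 1) by
      obtain ⟨N, hN⟩ := h
      exact ⟨N, lt_of_le_of_lt (by exact_mod_cast sub_le_sub_left (min_le_left ε 1) cinf) hN⟩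
    by_contra hcon
    push_neg at hcon
    -- choose almost optimal sets A n
    have hchoice : ∀ n : ℕ, ∃ A ∈ F, (⨆ x ∈ A, J ((n : ℝ) + 1) x) < ((cinf - ε' / 2 : ℝ) : EReal) := by
      intro n
      have hpos : (0 : ℝ) < (n : ℝ) + 1 := by positivity
      obtain ⟨r, hr⟩ := hcreal ((n : ℝ) + 1) hpos
      have hrle : (r : EReal) ≤ ((cinf - ε' : ℝ) : EReal) := hr ▸ hcon n
      have hlt : cβ ((n : ℝ) + 1) < ((cinf - ε' / 2 : ℝ) : EReal) := by
        rw [hr]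
        refine lt_of_le_of_lt hrle ?_
        exact_mod_cast by linarith
      rw [hcβ] at hlt
      simpa [iInf_lt_iff] using hlt
    choose A hAF hAlt using hchoice
    -- bound needed for (F2')
    have hS : SeqLimsup A ∈ F := by
      refine hF2' A hAF ⟨1, one_pos, fun n x hx => ?_⟩
      have h1 : J 1 x ≤ J ((n : ℝ) + 1) x :=
        hmono 1 ((n : ℝ) + 1) one_pos (by simp [Nat.cast_nonneg]) x
      have h2 : J ((n : ℝ) + 1) x ≤ ((cinf - ε' / 2 : ℝ) : EReal) :=
        le_of_lt (lt_of_le_of_lt (le_iSup₂ (f := fun y (_ : y ∈ A n) => J ((n : ℝ) + 1) y) x hx) (hAlt n))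
      refine (h1.trans h2).trans ?_
      have : ((cinf - ε' / 2 : ℝ) : EReal) ≤ ((cinf + 1 : ℝ) : EReal) := by
        exact_mod_cast by linarith
      simpa [EReal.coe_add] using this
    -- the limsup set carries Jinf-values up to cinf
    have hsup : (cinf : EReal) ≤ ⨆ x ∈ SeqLimsup A, Jinf x := by
      rw [← hcinf]
      exact iInf₂_le (SeqLimsup A) hS
    have hx : ∃ x ∈ SeqLimsup A, ((cinf - ε' / 2 : ℝ) : EReal) < Jinf x := by
      have : ((cinf - ε' / 2 : ℝ) : EReal) < ⨆ x ∈ SeqLimsup A, Jinf x := by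
        refine lt_of_lt_of_le ?_ hsup
        exact_mod_cast by linarith
      simpa [lt_iSup_iff] using this
    obtain ⟨x, hxS, hxJ⟩ := hx
    rw [hJinf] at hxJ
    rw [lt_iSup_iff] at hxJ
    obtain ⟨β, hβJ⟩ := hxJ
    rw [lt_iSup_iff] at hβJ
    obtain ⟨hβ, hβJ⟩ := hβJ
    obtain ⟨φ, hφ, y, hyA, hyx⟩ := hxS
    -- lower semicontinuity
    have hev : ∀ᶠ n in atTop, ((cinf - ε' / 2 : ℝ) : EReal) < J β (y n) :=
      hyx.eventually (hlsc β hβ x _ hβJ)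
    have hev2 : ∀ᶠ n in atTop, β ≤ (φ n : ℝ) + 1 := by
      filter_upwards [eventually_ge_atTop ⌈β⌉₊] with n hn
      have : β ≤ (n : ℝ) := le_trans (Nat.le_ceil β) (by exact_mod_cast hn)
      have h2 : (n : ℝ) ≤ (φ n : ℝ) := by exact_mod_cast hφ.le_apply
      linarith
    obtain ⟨n, h1, h2⟩ := (hev.and hev2).exists
    have h3 : J β (y n) ≤ J ((φ n : ℝ) + 1) (y n) := hmono β _ hβ h2 (y n)
    have h4 : J ((φ n : ℝ) + 1) (y n) < ((cinf - ε' / 2 : ℝ) : EReal) :=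
      lt_of_le_of_lt (le_iSup₂ (f := fun z (_ : z ∈ A (φ n)) => J ((φ n : ℝ) + 1) z) (y n) (hyA n)) (hAlt (φ n))
    exact absurd (h1.trans (h3.trans_lt h4)) (lt_irrefl _)
  -- convergence of c_{b n} to cinf
  have htend : ∀ b : ℕ → ℝ, (∀ n, 0 < b n) → Tendsto b atTop atTop →
      Tendsto (fun n => cβ (b n)) atTop (𝓝 (cinf : EReal)) := by
    intro b hb hbtop
    refine tendsto_order.2 ⟨?_, ?_⟩
    · intro a ha
      obtain ⟨r, har, hrc⟩ := EReal.exists_between_coe_real ha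
      have hε : 0 < cinf - r := by
        have := EReal.coe_lt_coe_iff.mp hrc
        linarith
      obtain ⟨N, hN⟩ := hlow (cinf - r) hε
      have hev : ∀ᶠ n in atTop, (N : ℝ) + 1 ≤ b n := hbtop.eventually_ge_atTop _
      filter_upwards [hev] with n hn
      have : cβ ((N : ℝ) + 1) ≤ cβ (b n) := hcmono _ _ (by positivity) hn
      have h' : ((r : ℝ) : EReal) < cβ (b n) := by
        refine lt_of_lt_of_le ?_ this
        simpa using hN
      exact har.trans h'
    · intro a ha
      filter_upwards with n
      exact lt_of_le_of_lt (hcle (b n) (hb n)) ha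
  constructor
  · -- part (a)
    intro b hb hbtop u hu x hux
    rw [hCstar]
    have hu' : ∀ n, J (b n) (u n) = cβ (b n) ∧ J (b n) (η (b n) (u n)) = cβ (b n) := by
      intro n
      have := hu n
      rwa [hKdef] at this
    refine ⟨u, b, hb, hbtop, hux, ?_, ?_⟩
    · have : (fun n => J (b n) (u n)) = fun n => cβ (b n) := funext fun n => (hu' n).1
      rw [this]; exact htend b hb hbtop
    · have : (fun n => J (b n) (η (b n) (u n))) = fun n => cβ (b n) :=
        funext fun n => (hu' n).2
      rw [this]; exact htend b hb hbtop
  · -- part (b)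
    intro x hx
    rw [hCstar] at hx
    obtain ⟨u, b, hb, hbtop, hux, hJu, -⟩ := hx
    rw [hJinf]
    refine iSup₂_le fun β hβ => ?_
    by_contra hcon
    push_neg at hcon
    obtain ⟨r, hr1, hr2⟩ := EReal.exists_between_coe_real hcon
    have hev1 : ∀ᶠ n in atTop, ((r : ℝ) : EReal) < J β (u n) :=
      hux.eventually (hlsc β hβ x _ hr2)
    have hev2 : ∀ᶠ n in atTop, β ≤ b n := hbtop.eventually_ge_atTop β
    have hev3 : ∀ᶠ n in atTop, J (b n) (u n) < ((r : ℝ) : EReal) :=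
      hJu.eventually_lt_const hr1
    obtain ⟨n, h1, h2, h3⟩ := (hev1.and (hev2.and hev3)).exists
    exact absurd (h1.trans_le ((hmono β (b n) hβ h2 (u n)).trans h3.le)) (lt_irrefl _)
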